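/- Let φ be the action of ℤ on ℤ with φ_n(x) = (-1)^n · x, and consider X = ℤ with positive cone {0} and B = ℤ with positive cone ℕ. Let P be the smallest submonoid of ℤ ⋊_φ ℤ closed under conjugation containing {0} × ℕ (the minimal compatible cone). Then (2x, n) ∈ P for every x ∈ ℤ and every n ≥ 1. Consequently the set Q = {(x,n) : n ≥ 0 and (x, 2n) ∈ P} is a compatible positive cone on the direct product ℤ × ℤ (kernel (ℤ,{0}), quotient (ℤ,ℕ), trivial action, since φ_{2n} = id) containing (2,1), and hence Q strictly contains {0} × ℕ, which is the smallest conjugation-closed submonoid of ℤ × ℤ containing {0} × ℕ. Thus the pullback along n ↦ 2n of a point carrying the minimal compatible order does not carry the minimal compatible order: strong points are not stable under pullback. -/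

import Mathlib

namespace PreordGrp

/-- A positive cone on an additive group: a submonoid closed under conjugation.
It induces the preorder `x ≤ y ↔ -x + y ∈ P`. -/
def IsCone {G : Type*} [AddGroup G] (P : Set G) : Prop :=
  (0 : G) ∈ P ∧ (∀ x ∈ P, ∀ y ∈ P, x + y ∈ P) ∧ ∀ x ∈ P, ∀ a : G, a + x - a ∈ P

/-- `x ≤ y` in the preorder induced by the cone `P`. -/
def coneLe {G : Type*} [AddGroup G] (P : Set G) (x y : G) : Prop := -x + y ∈ P

/-- `x ~ y` : both `x ≤ y` and `y ≤ x` in the preorder induced by `P`. -/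
def coneSim {G : Type*} [AddGroup G] (P : Set G) (x y : G) : Prop :=
  coneLe P x y ∧ coneLe P y x

section SDP

variable {X B : Type*} [AddGroup X] [AddGroup B]

/-- An action of `B` on `X` by group automorphisms:
`φ 0 = id` and `φ (b + b') = φ b ∘ φ b'`. -/
def IsAction (φ : B → X ≃+ X) : Prop :=
  (∀ x : X, φ 0 x = x) ∧ ∀ b b' : B, ∀ x : X, φ (b + b') x = φ b (φ b' x)

/-- Addition in the semidirect product `X ⋊_φ B`:
`(x, b) + (x', b') = (x + φ b x', b + b')`. -/
def sAdd (φ : B → X ≃+ X) (p q : X × B) : X × B := (p.1 + φ p.2 q.1, p.2 + q.2)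

/-- Negation in the semidirect product `X ⋊_φ B`. -/
def sNeg (φ : B → X ≃+ X) (p : X × B) : X × B := (-(φ (-p.2) p.1), -p.2)

/-- A positive cone on `X ⋊_φ B`: contains `0`, closed under addition and
under conjugation `p ↦ g + p - g`. -/
def IsSCone (φ : B → X ≃+ X) (P : Set (X × B)) : Prop :=
  ((0, 0) : X × B) ∈ P ∧ (∀ p ∈ P, ∀ q ∈ P, sAdd φ p q ∈ P) ∧
    ∀ p ∈ P, ∀ g : X × B, sAdd φ (sAdd φ g p) (sNeg φ g) ∈ P

/-- A compatible positive cone `P` on `X ⋊_φ B`: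
(a) `(x, b) ∈ P → b ∈ PB`, (b) `(x, 0) ∈ P ↔ x ∈ PX`, (c) `b ∈ PB → (0, b) ∈ P`. -/
def IsCompatible (φ : B → X ≃+ X) (PX : Set X) (PB : Set B) (P : Set (X × B)) : Prop :=
  IsSCone φ P ∧ (∀ x b, (x, b) ∈ P → b ∈ PB) ∧
    (∀ x : X, (x, (0 : B)) ∈ P ↔ x ∈ PX) ∧ ∀ b ∈ PB, ((0 : X), b) ∈ P

/-- The lexicographic cone: `(x, b)` with `b > 0`, or `b ~ 0` and `x ∈ PX`. -/
def lexCone (PX : Set X) (PB : Set B) : Set (X × B) :=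
  {p | (p.2 ∈ PB ∧ -p.2 ∉ PB) ∨ (p.2 ∈ PB ∧ -p.2 ∈ PB ∧ p.1 ∈ PX)}

/-- The smallest positive cone (conjugation-closed submonoid) of `X ⋊_φ B`
containing the product cone `PX ×ˢ PB`. -/
def genCone (φ : B → X ≃+ X) (PX : Set X) (PB : Set B) : Set (X × B) :=
  ⋂₀ {Q : Set (X × B) | IsSCone φ Q ∧ PX ×ˢ PB ⊆ Q}

end SDP

lemma genCone_sCone {X B : Type*} [AddGroup X] [AddGroup B]
    (φ : B → X ≃+ X) (PX : Set X) (PB : Set B) :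
    IsSCone φ (genCone φ PX PB) := by
  refine ⟨?_, ?_, ?_⟩
  · exact Set.mem_sInter.mpr fun Q hQ => hQ.1.1
  · intro p hp q hq
    exact Set.mem_sInter.mpr fun Q hQ =>
      hQ.1.2.1 p (Set.mem_sInter.mp hp Q hQ) q (Set.mem_sInter.mp hq Q hQ)
  · intro p hp g
    exact Set.mem_sInter.mpr fun Q hQ => hQ.1.2.2 p (Set.mem_sInter.mp hp Q hQ) g

lemma subset_genCone {X B : Type*} [AddGroup X] [AddGroup B]
    (φ : B → X ≃+ X) (PX : Set X) (PB : Set B) :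
    PX ×ˢ PB ⊆ genCone φ PX PB :=
  fun _ hp => Set.mem_sInter.mpr fun _ hQ => hQ.2 hp

/-- for the action `φ b x = (-1)^b * x` of `(ℤ, ℕ)` on `(ℤ, {0})`,
the minimal compatible cone `P` on `ℤ ⋊_φ ℤ` contains `(2x, n)` for all `x` and
all `n ≥ 1`; hence its pullback `Q` along `n ↦ 2n` is a compatible cone on the
direct product `ℤ × ℤ` containing `(2, 1)`, strictly containing `{0} ×ˢ ℕ`,
which is the minimal compatible cone for the trivial action: strong points are
not stable under pullback. -/
theorem stmt10 (φ : ℤ → ℤ ≃+ ℤ) (hφ : IsAction φ)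
    (hdef : ∀ b x : ℤ, φ b x = (((-1 : ℤˣ) ^ b : ℤˣ) : ℤ) * x)
    (P : Set (ℤ × ℤ)) (hPdef : P = genCone φ ({0} : Set ℤ) {n : ℤ | 0 ≤ n})
    (Q : Set (ℤ × ℤ))
    (hQdef : Q = {p : ℤ × ℤ | 0 ≤ p.2 ∧ (p.1, 2 * p.2) ∈ P}) :
    (∀ x n : ℤ, 1 ≤ n → (2 * x, n) ∈ P) ∧
    IsCompatible (fun _ : ℤ => AddEquiv.refl ℤ) ({0} : Set ℤ) {n : ℤ | 0 ≤ n} Q ∧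
    ((2, 1) : ℤ × ℤ) ∈ Q ∧
    genCone (fun _ : ℤ => AddEquiv.refl ℤ) ({0} : Set ℤ) {n : ℤ | 0 ≤ n}
      = ({0} : Set ℤ) ×ˢ {n : ℤ | 0 ≤ n} ∧
    ({0} : Set ℤ) ×ˢ {n : ℤ | 0 ≤ n} ⊂ Q := by
  -- basic facts about φ
  have h0 : ∀ x : ℤ, φ 0 x = x := hφ.1
  have h1 : ∀ x : ℤ, φ 1 x = -x := by
    intro x; rw [hdef]; norm_num
  have heven : ∀ n x : ℤ, φ (2 * n) x = x := by
    intro n x; rw [hdef]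
    have h : ((-1 : ℤˣ) ^ (2 * n)) = 1 := by
      rw [zpow_mul]
      have h2 : ((-1 : ℤˣ) ^ (2 : ℤ)) = 1 := by
        rw [show (2:ℤ) = ((2:ℕ):ℤ) from rfl, zpow_natCast]
        exact Int.units_sq (-1)
      rw [h2, one_zpow]
    rw [h]; simp
  -- P is a cone containing {0} ×ˢ ℕ
  have hPcone : IsSCone φ P := hPdef ▸ genCone_sCone φ _ _
  have hsub : ({0} : Set ℤ) ×ˢ {n : ℤ | 0 ≤ n} ⊆ P := hPdef ▸ subset_genCone φ _ _
  have h0n : ∀ n : ℤ, 0 ≤ n → ((0 : ℤ), n) ∈ P := fun n hn => hsub ⟨rfl, hn⟩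
  -- main claim: (2x, n) ∈ P for n ≥ 1
  have hmain : ∀ x n : ℤ, 1 ≤ n → (2 * x, n) ∈ P := by
    intro x n hn
    have h01 : ((0 : ℤ), (1 : ℤ)) ∈ P := h0n 1 one_pos.le
    have hc := hPcone.2.2 ((0 : ℤ), (1 : ℤ)) h01 (x, 0)
    have hc2 : ((2 * x, (1 : ℤ)) : ℤ × ℤ) ∈ P := by
      have he : sAdd φ (sAdd φ (x, 0) ((0 : ℤ), (1 : ℤ))) (sNeg φ (x, 0)) = (2 * x, 1) := by
        simp [sAdd, sNeg, h0, h1, two_mul]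
      rwa [he] at hc
    have ha := hPcone.2.1 _ hc2 _ (h0n (n - 1) (by omega))
    have he : sAdd φ ((2 * x, (1 : ℤ)) : ℤ × ℤ) ((0 : ℤ), n - 1) = (2 * x, n) := by
      simp [sAdd, h1]
    rwa [he] at ha
  -- upper bound R for P : second coordinate nonneg, and zero forces first zero
  have hPR : P ⊆ {p : ℤ × ℤ | 0 ≤ p.2 ∧ (p.2 = 0 → p.1 = 0)} := by
    rw [hPdef]
    apply Set.sInter_subset_of_mem
    refine ⟨⟨⟨le_refl 0, fun _ => rfl⟩, ?_, ?_⟩, ?_⟩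
    · rintro ⟨p1, p2⟩ ⟨hp2, hp1⟩ ⟨q1, q2⟩ ⟨hq2, hq1⟩
      refine ⟨by simpa [sAdd] using add_nonneg hp2 hq2, ?_⟩
      simp only [sAdd]
      intro h
      have e2 : p2 = 0 := by omega
      have e2' : q2 = 0 := by omega
      have e1 : p1 = 0 := hp1 e2
      have e1' : q1 = 0 := hq1 e2'
      rw [e1, e1']; simp
    · rintro ⟨p1, p2⟩ ⟨hp2, hp1⟩ ⟨g1, g2⟩
      constructor
      · simp only [sAdd, sNeg]; omega
      · simp only [sAdd, sNeg]
        intro h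
        have hp20 : p2 = 0 := by omega
        have e1 : p1 = 0 := hp1 hp20
        rw [e1, hp20]
        have hcomp := hφ.2 g2 (-g2) g1
        simp only [add_neg_cancel, h0] at hcomp
        simp [← hcomp]
    · rintro ⟨p1, p2⟩ ⟨hp1, hp2⟩
      exact ⟨hp2, fun _ => hp1⟩
  have hP0 : ∀ x : ℤ, ((x, (0 : ℤ)) : ℤ × ℤ) ∈ P ↔ x = 0 := by
    intro x
    constructor
    · intro h; exact (hPR h).2 rfl
    · rintro rfl; exact h0n 0 le_rfl
  -- conjugation in the direct product is trivial
  have hconj : ∀ p g : ℤ × ℤ,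
      sAdd (fun _ : ℤ => AddEquiv.refl ℤ) (sAdd (fun _ : ℤ => AddEquiv.refl ℤ) g p)
        (sNeg (fun _ : ℤ => AddEquiv.refl ℤ) g) = p := by
    rintro ⟨p1, p2⟩ ⟨g1, g2⟩
    simp [sAdd, sNeg]
  -- Q is compatible
  have hQcomp : IsCompatible (fun _ : ℤ => AddEquiv.refl ℤ) ({0} : Set ℤ) {n : ℤ | 0 ≤ n} Q := by
    subst hQdef
    refine ⟨⟨⟨le_refl 0, by simpa using h0n 0 le_rfl⟩, ?_, ?_⟩, ?_, ?_, ?_⟩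
    · rintro ⟨p1, p2⟩ ⟨hp2, hp⟩ ⟨q1, q2⟩ ⟨hq2, hq⟩
      refine ⟨by simpa [sAdd] using add_nonneg hp2 hq2, ?_⟩
      have := hPcone.2.1 _ hp _ hq
      have he : sAdd φ (p1, 2 * p2) (q1, 2 * q2) = (p1 + q1, 2 * (p2 + q2)) := by
        simp only [sAdd, heven, Prod.mk.injEq]
        exact ⟨trivial, by ring⟩
      rw [he] at this
      simpa [sAdd] using this
    · rintro p hp g
      rw [hconj]; exact hp
    · exact fun x b hb => hb.1
    · intro x
      simp only [Set.mem_setOf_eq, mul_zero]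
      rw [hP0]
      simp
    · intro b hb
      exact ⟨hb, h0n (2 * b) (by simp only [Set.mem_setOf_eq] at hb; omega)⟩
  -- (2,1) ∈ Q
  have h21 : ((2, 1) : ℤ × ℤ) ∈ Q := by
    rw [hQdef]
    exact ⟨one_pos.le, by simpa using hmain 1 2 (by norm_num)⟩
  -- genCone for the trivial action is {0} ×ˢ ℕ
  have hgen : genCone (fun _ : ℤ => AddEquiv.refl ℤ) ({0} : Set ℤ) {n : ℤ | 0 ≤ n}
      = ({0} : Set ℤ) ×ˢ {n : ℤ | 0 ≤ n} := by
    apply le_antisymm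
    · apply Set.sInter_subset_of_mem
      refine ⟨⟨⟨rfl, by norm_num⟩, ?_, ?_⟩, le_refl _⟩
      · rintro ⟨p1, p2⟩ ⟨hp1, hp2⟩ ⟨q1, q2⟩ ⟨hq1, hq2⟩
        simp only [Set.mem_singleton_iff] at hp1 hq1
        exact ⟨by simp [sAdd, hp1, hq1], by simpa [sAdd] using add_nonneg hp2 hq2⟩
      · rintro p hp g
        rw [hconj]; exact hp
    · exact subset_genCone _ _ _
  refine ⟨hmain, hQcomp, h21, hgen, ?_⟩
  constructor
  · rintro ⟨p1, p2⟩ ⟨hp1, hp2⟩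
    simp only [Set.mem_singleton_iff] at hp1
    rw [hQdef]
    exact ⟨hp2, hp1 ▸ h0n (2 * p2) (by simp only [Set.mem_setOf_eq] at hp2; omega)⟩
  · intro h
    have := h h21
    simp [Set.mem_prod] at this


end PreordGrp
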